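/- Uniqueness for the DPP: if u and v are bounded Borel functions on Ω_ε that both satisfy the DPP at every point of Ω and u = v on Γ_ε, then u = v on all of Ω_ε. -/

import Mathlib

open MeasureTheory Metric Set

private lemma abs_coord_le_dist {n : ℕ} (z w : EuclideanSpace ℝ (Fin n)) (i : Fin n) :
    |z i - w i| ≤ dist z w := by
  rw [EuclideanSpace.dist_eq, ← Real.sqrt_sq_eq_abs]
  apply Real.sqrt_le_sqrt
  have := Finset.single_le_sum (f := fun j => dist (z j) (w j) ^ 2)
    (fun j _ => sq_nonneg _) (Finset.mem_univ i)
  simpa [Real.dist_eq, sq_abs] using this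

set_option maxHeartbeats 1000000 in
private theorem dpp_le (n : ℕ) (hn : 2 ≤ n) (p : ℝ) (hp : 2 < p)
    (Ω : Set (EuclideanSpace ℝ (Fin n)))
    (hΩopen : IsOpen Ω) (hΩne : Ω.Nonempty) (hΩbdd : Bornology.IsBounded Ω)
    (ε : ℝ) (hε : ε ∈ Set.Ioo (0 : ℝ) 1)
    (u v : EuclideanSpace ℝ (Fin n) → ℝ)
    (humeas : Measurable u) (hvmeas : Measurable v)
    (hubdd : ∃ M, ∀ x ∈ Ω ∪ {x | x ∉ Ω ∧ Metric.infDist x (frontier Ω) ≤ ε}, |u x| ≤ M)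
    (hvbdd : ∃ M, ∀ x ∈ Ω ∪ {x | x ∉ Ω ∧ Metric.infDist x (frontier Ω) ≤ ε}, |v x| ≤ M)
    (hudpp : ∀ x ∈ Ω, u x =
        ((p - 2) / (n + p)) / (2 * ε) *
            (∫ t in (0 : ℝ)..ε, (sSup (u '' Metric.ball x t) + sInf (u '' Metric.ball x t)))
          + ((n + 2) / (n + p)) * ⨍ z in Metric.ball x ε, u z)
    (hvdpp : ∀ x ∈ Ω, v x =
        ((p - 2) / (n + p)) / (2 * ε) *
            (∫ t in (0 : ℝ)..ε, (sSup (v '' Metric.ball x t) + sInf (v '' Metric.ball x t)))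
          + ((n + 2) / (n + p)) * ⨍ z in Metric.ball x ε, v z)
    (hbdry : ∀ x ∈ {x | x ∉ Ω ∧ Metric.infDist x (frontier Ω) ≤ ε}, u x = v x) :
    ∀ x ∈ Ω ∪ {x | x ∉ Ω ∧ Metric.infDist x (frontier Ω) ≤ ε}, u x ≤ v x := by
  obtain ⟨hε0, hε1⟩ := hε
  set Γ : Set (EuclideanSpace ℝ (Fin n)) :=
    {x | x ∉ Ω ∧ Metric.infDist x (frontier Ω) ≤ ε} with hΓdef
  set D : Set (EuclideanSpace ℝ (Fin n)) := Ω ∪ Γ with hDdef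
  set A : ℝ := (p - 2) / (n + p) with hAdef
  set B : ℝ := ((n : ℝ) + 2) / (n + p) with hBdef
  have hnp : (0 : ℝ) < (n : ℝ) + p := by positivity
  have hA0 : 0 < A := div_pos (by linarith) hnp
  have hB0 : 0 < B := div_pos (by positivity) hnp
  have hAB : A + B = 1 := by rw [hAdef, hBdef, ← add_div, div_eq_one_iff_eq hnp.ne']; ring
  obtain ⟨Mu, hMu⟩ := hubdd
  obtain ⟨Mv, hMv⟩ := hvbdd
  set h : EuclideanSpace ℝ (Fin n) → ℝ := fun z => u z - v z with hhdef
  have hDne : D.Nonempty := hΩne.mono subset_union_left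
  have hbddh : BddAbove (h '' D) := by
    refine ⟨Mu + Mv, ?_⟩
    rintro _ ⟨z, hz, rfl⟩
    have h1 := abs_le.1 (hMu z hz)
    have h2 := abs_le.1 (hMv z hz)
    simp only [hhdef]; linarith [h1.2, h2.1]
  set M : ℝ := sSup (h '' D) with hMdef
  have hleM : ∀ z ∈ D, h z ≤ M := fun z hz => le_csSup hbddh (mem_image_of_mem h hz)
  by_cases hM : M ≤ 0
  · exact fun x hx => sub_nonpos.1 ((hleM x hx).trans hM)
  push_neg at hM
  exfalso
  -- geometry: balls around points of Ω stay in D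
  have hsub : ∀ x ∈ Ω, ∀ t, t ≤ ε → ball x t ⊆ D := by
    intro x hx t ht z hz
    by_cases hzΩ : z ∈ Ω
    · exact Or.inl hzΩ
    · refine Or.inr ⟨hzΩ, ?_⟩
      have hne : Ωᶜ ≠ univ := by
        intro hcon
        exact (hcon ▸ (fun hxx => hxx hx : x ∈ Ωᶜ → False)) (mem_univ x)
      have hzc : z ∈ Ωᶜ := hzΩ
      obtain ⟨y, hyf, hyd⟩ := exists_mem_frontier_infDist_compl_eq_dist hzc hne
      rw [frontier_compl] at hyf
      have h1 : infDist z (frontier Ω) ≤ dist z y := infDist_le_dist_of_mem hyf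
      rw [← hyd, compl_compl] at h1
      have h2 : infDist z Ω ≤ dist z x := infDist_le_dist_of_mem hx
      have h3 : dist z x < t := mem_ball.1 hz
      linarith
  -- a.e.-free pointwise bound on h over D
  have hballD : ∀ x ∈ Ω, ball x ε ⊆ D := fun x hx => hsub x hx ε le_rfl
  -- the key estimate
  have key : ∀ x ∈ Ω, h x ≤ A * M +
      B * ((volume (ball x ε)).toReal⁻¹ * ∫ z in ball x ε, h z) := by
    intro x hx
    have hBlD : ball x ε ⊆ D := hballD x hx
    have hBlm : MeasurableSet (ball x ε) := measurableSet_ball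
    have hBfin : volume (ball x ε) ≠ ⊤ := measure_ball_lt_top.ne
    have hIu : IntegrableOn u (ball x ε) := by
      refine Measure.integrableOn_of_bounded (M := Mu) hBfin humeas.aestronglyMeasurable ?_
      rw [ae_restrict_iff' hBlm]
      filter_upwards with z hz
      simpa [Real.norm_eq_abs] using hMu z (hBlD hz)
    have hIv : IntegrableOn v (ball x ε) := by
      refine Measure.integrableOn_of_bounded (M := Mv) hBfin hvmeas.aestronglyMeasurable ?_
      rw [ae_restrict_iff' hBlm]
      filter_upwards with z hz
      simpa [Real.norm_eq_abs] using hMv z (hBlD hz)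
    have hIh : IntegrableOn h (ball x ε) := hIu.sub hIv
    -- integrability of the radial integrands
    have gen : ∀ (w : EuclideanSpace ℝ (Fin n) → ℝ) (Mw : ℝ), Measurable w →
        (∀ z ∈ D, |w z| ≤ Mw) →
        IntegrableOn (fun t => sSup (w '' ball x t) + sInf (w '' ball x t))
          (Ioc (0:ℝ) ε) volume := by
      intro w Mw hw hMw
      have hbddA : ∀ t, t ≤ ε → BddAbove (w '' ball x t) := by
        intro t ht
        refine ⟨Mw, ?_⟩
        rintro _ ⟨z, hz, rfl⟩
        exact (abs_le.1 (hMw z (hsub x hx t ht hz))).2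
      have hbddB : ∀ t, t ≤ ε → BddBelow (w '' ball x t) := by
        intro t ht
        refine ⟨-Mw, ?_⟩
        rintro _ ⟨z, hz, rfl⟩
        exact (abs_le.1 (hMw z (hsub x hx t ht hz))).1
      have hmono : MonotoneOn (fun t => sSup (w '' ball x t)) (Ioc (0:ℝ) ε) := by
        intro s hs t ht hst
        exact csSup_le_csSup (hbddA t ht.2) ((nonempty_ball.2 hs.1).image w)
          (image_mono (ball_subset_ball hst))
      have hanti : AntitoneOn (fun t => sInf (w '' ball x t)) (Ioc (0:ℝ) ε) := by
        intro s hs t ht hst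
        exact csInf_le_csInf (hbddB t ht.2) ((nonempty_ball.2 hs.1).image w)
          (image_mono (ball_subset_ball hst))
      have haem : AEMeasurable (fun t => sSup (w '' ball x t) + sInf (w '' ball x t))
          (volume.restrict (Ioc (0:ℝ) ε)) :=
        (aemeasurable_restrict_of_monotoneOn measurableSet_Ioc hmono).add
          (aemeasurable_restrict_of_antitoneOn measurableSet_Ioc hanti)
      refine ⟨haem.aestronglyMeasurable, ?_⟩
      refine HasFiniteIntegral.restrict_of_bounded (C := 2 * Mw) measure_Ioc_lt_top ?_
      rw [ae_restrict_iff' measurableSet_Ioc]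
      filter_upwards with t ht
      obtain ⟨z, hz⟩ := (nonempty_ball (x := x)).2 ht.1
      have h1 : sSup (w '' ball x t) ≤ Mw := by
        apply csSup_le ((nonempty_ball.2 ht.1).image w)
        rintro _ ⟨y, hy, rfl⟩
        exact (abs_le.1 (hMw y (hsub x hx t ht.2 hy))).2
      have h2 : -Mw ≤ sSup (w '' ball x t) :=
        le_trans (abs_le.1 (hMw z (hsub x hx t ht.2 hz))).1
          (le_csSup (hbddA t ht.2) (mem_image_of_mem w hz))
      have h3 : sInf (w '' ball x t) ≤ Mw :=
        le_trans (csInf_le (hbddB t ht.2) (mem_image_of_mem w hz))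
          (abs_le.1 (hMw z (hsub x hx t ht.2 hz))).2
      have h4 : -Mw ≤ sInf (w '' ball x t) := by
        apply le_csInf ((nonempty_ball.2 ht.1).image w)
        rintro _ ⟨y, hy, rfl⟩
        exact (abs_le.1 (hMw y (hsub x hx t ht.2 hy))).1
      rw [Real.norm_eq_abs, abs_le]
      constructor <;> linarith
    have hIU := gen u Mu humeas hMu
    have hIV := gen v Mv hvmeas hMv
    -- pointwise comparison of the radial integrands
    have hpt : ∀ t ∈ Ioc (0:ℝ) ε,
        sSup (u '' ball x t) + sInf (u '' ball x t) ≤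
        (sSup (v '' ball x t) + sInf (v '' ball x t)) + 2 * M := by
      intro t ht
      have hne : (ball x t).Nonempty := nonempty_ball.2 ht.1
      have hbv : BddAbove (v '' ball x t) := by
        refine ⟨Mv, ?_⟩
        rintro _ ⟨z, hz, rfl⟩
        exact (abs_le.1 (hMv z (hsub x hx t ht.2 hz))).2
      have hbu : BddBelow (u '' ball x t) := by
        refine ⟨-Mu, ?_⟩
        rintro _ ⟨z, hz, rfl⟩
        exact (abs_le.1 (hMu z (hsub x hx t ht.2 hz))).1
      have h1 : sSup (u '' ball x t) ≤ sSup (v '' ball x t) + M := by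
        apply csSup_le (hne.image u)
        rintro _ ⟨z, hz, rfl⟩
        have := hleM z (hsub x hx t ht.2 hz)
        have hv := le_csSup hbv (mem_image_of_mem v hz)
        simp only [hhdef] at this
        linarith
      have h2 : sInf (u '' ball x t) ≤ sInf (v '' ball x t) + M := by
        rw [← sub_le_iff_le_add]
        apply le_csInf (hne.image v)
        rintro _ ⟨z, hz, rfl⟩
        have := hleM z (hsub x hx t ht.2 hz)
        have hu := csInf_le hbu (mem_image_of_mem u hz)
        simp only [hhdef] at this
        linarith
      linarith
    -- integral comparison
    have hint : (∫ t in (0:ℝ)..ε, (sSup (u '' ball x t) + sInf (u '' ball x t))) ≤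
        (∫ t in (0:ℝ)..ε, (sSup (v '' ball x t) + sInf (v '' ball x t))) + 2 * M * ε := by
      rw [intervalIntegral.integral_of_le hε0.le, intervalIntegral.integral_of_le hε0.le]
      have hconst : IntegrableOn (fun _ : ℝ => 2 * M) (Ioc (0:ℝ) ε) volume :=
        integrableOn_const measure_Ioc_lt_top.ne
      calc (∫ t in Ioc (0:ℝ) ε, (sSup (u '' ball x t) + sInf (u '' ball x t)))
          ≤ ∫ t in Ioc (0:ℝ) ε,
              ((sSup (v '' ball x t) + sInf (v '' ball x t)) + 2 * M) :=
            setIntegral_mono_on hIU (hIV.add hconst) measurableSet_Ioc hpt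
        _ = (∫ t in Ioc (0:ℝ) ε, (sSup (v '' ball x t) + sInf (v '' ball x t)))
              + ∫ _ in Ioc (0:ℝ) ε, (2:ℝ) * M := integral_add hIV hconst
        _ = (∫ t in Ioc (0:ℝ) ε, (sSup (v '' ball x t) + sInf (v '' ball x t)))
              + 2 * M * ε := by
            rw [setIntegral_const]
            simp [Real.volume_Ioc, ENNReal.toReal_ofReal hε0.le]
            rw [max_eq_left hε0.le]; ring
    -- averages
    have havgu : (⨍ z in ball x ε, u z) = (volume (ball x ε)).toReal⁻¹ * ∫ z in ball x ε, u z := by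
      rw [setAverage_eq]; simp [smul_eq_mul, measureReal_def]
    have havgv : (⨍ z in ball x ε, v z) = (volume (ball x ε)).toReal⁻¹ * ∫ z in ball x ε, v z := by
      rw [setAverage_eq]; simp [smul_eq_mul, measureReal_def]
    have hsubint : (∫ z in ball x ε, h z) = (∫ z in ball x ε, u z) - ∫ z in ball x ε, v z := by
      simp only [hhdef]
      exact integral_sub hIu hIv
    have equ := hudpp x hx
    have eqv := hvdpp x hx
    rw [havgu] at equ
    rw [havgv] at eqv
    have hA2ε : (0:ℝ) ≤ A / (2 * ε) := by positivity
    have hmul := mul_le_mul_of_nonneg_left hint hA2ε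
    have hAε : A / (2 * ε) * (2 * M * ε) = A * M := by
      field_simp
    simp only [hhdef]
    rw [hsubint]
    rw [equ, eqv]
    rw [mul_sub]
    nlinarith [hmul, hAε]
  -- constants
  have hn0 : 0 < n := by omega
  set i₀ : Fin n := ⟨0, hn0⟩ with hi₀def
  set e : EuclideanSpace ℝ (Fin n) := EuclideanSpace.single i₀ (1:ℝ) with hedef
  set c₀ : ℝ := (volume (ball (0 : EuclideanSpace ℝ (Fin n)) (ε/8))).toReal with hc₀def
  set VB : ℝ := (volume (ball (0 : EuclideanSpace ℝ (Fin n)) ε)).toReal with hVBdef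
  have hc₀pos : 0 < c₀ :=
    ENNReal.toReal_pos (measure_ball_pos _ _ (by linarith)).ne' measure_ball_lt_top.ne
  have hVBpos : 0 < VB :=
    ENNReal.toReal_pos (measure_ball_pos _ _ hε0).ne' measure_ball_lt_top.ne
  have hc₀VB : c₀ ≤ VB :=
    ENNReal.toReal_mono measure_ball_lt_top.ne (measure_mono (ball_subset_ball (by linarith)))
  have hvol : ∀ y : EuclideanSpace ℝ (Fin n), (volume (ball y ε)).toReal = VB := by
    intro y; rw [hVBdef, Measure.addHaar_ball_center]
  have hvolc : ∀ y : EuclideanSpace ℝ (Fin n), (volume (ball y (ε/8))).toReal = c₀ := by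
    intro y; rw [hc₀def, Measure.addHaar_ball_center]
  have hnorm_e : ‖e‖ = 1 := by simp [hedef, EuclideanSpace.norm_single]
  -- the step lemma
  have step : ∀ η η' : ℝ, 0 < η → 0 < η' → η' ≤ M → η * VB < B * η' * c₀ →
      ∀ x ∈ Ω, M - η < h x → ∃ y ∈ D, M - η' < h y ∧ x i₀ + ε/2 ≤ y i₀ := by
    intro η η' hη hη' hη'M hcond x hx hhx
    have hBlD : ball x ε ⊆ D := hballD x hx
    have hBlm : MeasurableSet (ball x ε) := measurableSet_ball
    have hBfin : volume (ball x ε) ≠ ⊤ := measure_ball_lt_top.ne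
    have hIh : IntegrableOn h (ball x ε) := by
      refine Measure.integrableOn_of_bounded (M := Mu + Mv) hBfin
        (humeas.sub hvmeas).aestronglyMeasurable ?_
      rw [ae_restrict_iff' hBlm]
      filter_upwards with z hz
      have h1 := abs_le.1 (hMu z (hBlD hz))
      have h2 := abs_le.1 (hMv z (hBlD hz))
      rw [Real.norm_eq_abs, abs_le]
      constructor <;> simp only [hhdef] <;> linarith
    have hk := key x hx
    rw [hvol x] at hk
    set I : ℝ := ∫ z in ball x ε, h z with hIdef
    have hIlow : (M - η / B) * VB ≤ I := by
      have hsum : A * M + B * M = M := by rw [← add_mul, hAB, one_mul]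
      have h6 : B * (M - η / B) ≤ B * (VB⁻¹ * I) := by
        have hBB : B * (M - η / B) = B * M - η := by
          field_simp
        rw [hBB]
        clear_value I VB M A B h
        linarith
      have h9 : M - η / B ≤ VB⁻¹ * I := le_of_mul_le_mul_left h6 hB0
      have h10 := mul_le_mul_of_nonneg_right h9 hVBpos.le
      have h11 : VB⁻¹ * I * VB = I := by field_simp
      linarith
    set cpt : EuclideanSpace ℝ (Fin n) := x + (3*ε/4) • e with hcptdef
    set cap : Set (EuclideanSpace ℝ (Fin n)) := ball cpt (ε/8) with hcapdef
    have hdcx : dist cpt x = 3*ε/4 := by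
      rw [hcptdef, dist_comm]
      rw [dist_self_add_right ((3*ε/4) • e) x, norm_smul, Real.norm_eq_abs, hnorm_e,
        abs_of_nonneg (by linarith)]
      ring
    have hcap1 : ∀ z ∈ cap, z ∈ ball x ε := by
      intro z hz
      have h1 : dist z cpt < ε/8 := mem_ball.1 hz
      have h2 := dist_triangle z cpt x
      exact mem_ball.2 (by rw [hdcx] at h2; linarith)
    have hcap2 : ∀ z ∈ cap, x i₀ + ε/2 ≤ z i₀ := by
      intro z hz
      have h1 := abs_le.1 (abs_coord_le_dist z cpt i₀)
      have h2 : cpt i₀ = x i₀ + 3*ε/4 := by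
        simp [hcptdef, hedef, EuclideanSpace.single_apply]
      have h3 : dist z cpt < ε/8 := mem_ball.1 hz
      rw [h2] at h1
      linarith [h1.1]
    have hcapm : MeasurableSet cap := measurableSet_ball
    have hcapsub : cap ⊆ ball x ε := fun z hz => hcap1 z hz
    have hex : ∃ z ∈ cap, M - η' < h z := by
      by_contra hno
      push_neg at hno
      have hIcap : IntegrableOn h cap := hIh.mono_set hcapsub
      have hIdiff : IntegrableOn h (ball x ε \ cap) := hIh.mono_set diff_subset
      have hsplit : I = (∫ z in cap, h z) + ∫ z in ball x ε \ cap, h z := by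
        rw [hIdef, ← setIntegral_union disjoint_sdiff_right (hBlm.diff hcapm) hIcap hIdiff,
          union_diff_cancel hcapsub]
      have hup1 : (∫ z in cap, h z) ≤ (M - η') * c₀ := by
        calc (∫ z in cap, h z) ≤ ∫ _ in cap, (M - η') :=
              setIntegral_mono_on hIcap
                (integrableOn_const (measure_ball_lt_top).ne) hcapm hno
          _ = (M - η') * c₀ := by
              rw [setIntegral_const, smul_eq_mul, hcapdef, measureReal_def, hvolc cpt, mul_comm]
      have hdvol : (volume (ball x ε \ cap)).toReal = VB - c₀ := by
        rw [measure_diff hcapsub hcapm.nullMeasurableSet measure_ball_lt_top.ne,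
          ENNReal.toReal_sub_of_le (measure_mono hcapsub) hBfin, hvol x, hcapdef, hvolc cpt]
      have hup2 : (∫ z in ball x ε \ cap, h z) ≤ M * (VB - c₀) := by
        calc (∫ z in ball x ε \ cap, h z) ≤ ∫ _ in ball x ε \ cap, M :=
              setIntegral_mono_on hIdiff
                (integrableOn_const ((measure_mono diff_subset).trans_lt measure_ball_lt_top).ne)
                (hBlm.diff hcapm) (fun z hz => hleM z (hBlD hz.1))
          _ = M * (VB - c₀) := by
              rw [setIntegral_const, smul_eq_mul, measureReal_def, hdvol, mul_comm]
      have hfin : (M - η / B) * VB ≤ M * VB - η' * c₀ := by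
        have h15 := hIlow
        rw [hsplit] at h15
        have h16 : (M - η') * c₀ + M * (VB - c₀) = M * VB - η' * c₀ := by ring
        linarith
      have hcontr : B * η' * c₀ ≤ η * VB := by
        have h12 : η' * c₀ ≤ η / B * VB := by
          have h17 : (M - η / B) * VB = M * VB - η / B * VB := by ring
          linarith
        have h13 := mul_le_mul_of_nonneg_left h12 hB0.le
        have h14 : B * (η / B * VB) = η * VB := by field_simp
        linarith [h13, h14.le]
      linarith
    obtain ⟨z, hzcap, hzh⟩ := hex
    exact ⟨z, hBlD (hcap1 z hzcap), hzh, hcap2 z hzcap⟩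
  -- boundedness of Ω in coordinates
  obtain ⟨r0, hr0⟩ := hΩbdd.subset_closedBall (0 : EuclideanSpace ℝ (Fin n))
  set r : ℝ := max r0 0 with hrdef
  have hΩr : Ω ⊆ closedBall 0 r := hr0.trans (closedBall_subset_closedBall (le_max_left _ _))
  have hcoord : ∀ y ∈ Ω, |y i₀| ≤ r := by
    intro y hy
    have h1 := abs_coord_le_dist y 0 i₀
    have h2 : dist y (0 : EuclideanSpace ℝ (Fin n)) ≤ r := mem_closedBall.1 (hΩr hy)
    simpa using h1.trans h2
  set R : ℝ := 2 * VB / (B * c₀) with hRdef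
  have hB1 : B ≤ 1 := by linarith
  have hR1 : 1 ≤ R := by
    rw [hRdef, le_div_iff₀ (by positivity)]
    nlinarith
  have hR0 : 0 < R := lt_of_lt_of_le one_pos hR1
  obtain ⟨N, hN⟩ := exists_nat_gt ((2*r + 1) / (ε/2))
  have hNe : 2*r + 1 < N * (ε/2) := by
    rw [div_lt_iff₀ (by linarith)] at hN
    linarith
  set η₀ : ℝ := M / (2 * R ^ N) with hη₀def
  have hη₀ : 0 < η₀ := by positivity
  have hηk : ∀ k, k ≤ N → η₀ * R ^ k ≤ M / 2 := by
    intro k hk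
    have h1 : R ^ k ≤ R ^ N := pow_le_pow_right₀ hR1 hk
    have h2 := mul_le_mul_of_nonneg_left h1 hη₀.le
    have h3 : η₀ * R ^ N = M / 2 := by
      rw [hη₀def]
      field_simp
    linarith
  have hstepcond : ∀ k : ℕ, (η₀ * R ^ k) * VB < B * (η₀ * R ^ (k+1)) * c₀ := by
    intro k
    have hpk : 0 < η₀ * R ^ k := by positivity
    have heq : B * (η₀ * R ^ (k+1)) * c₀ = (η₀ * R ^ k) * (2 * VB) := by
      rw [pow_succ, hRdef]
      field_simp
    rw [heq]
    have := mul_lt_mul_of_pos_left (show VB < 2 * VB by linarith) hpk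
    linarith
  have hΩmem : ∀ y ∈ D, M/2 < h y → y ∈ Ω := by
    intro y hy hhy
    rcases hy with hy | hy
    · exact hy
    · exfalso
      have h0 : h y = 0 := by simp [hhdef, hbdry y hy]
      rw [h0] at hhy
      linarith
  obtain ⟨_, ⟨x₀, hx₀D, rfl⟩, hx₀h⟩ :=
    exists_lt_of_lt_csSup (hDne.image h) (show M - η₀ < M by linarith)
  have hx₀Ω : x₀ ∈ Ω := by
    apply hΩmem x₀ hx₀D
    have := hηk 0 (Nat.zero_le N)
    simp only [pow_zero, mul_one] at this
    clear_value η₀ M h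
    linarith
  have hind : ∀ k, k ≤ N → ∃ y ∈ Ω, M - η₀ * R ^ k < h y ∧ x₀ i₀ + k * (ε/2) ≤ y i₀ := by
    intro k
    induction k with
    | zero =>
      intro _
      refine ⟨x₀, hx₀Ω, by simpa using hx₀h, by simp⟩
    | succ k ih =>
      intro hk1
      obtain ⟨y, hyΩ, hyh, hyc⟩ := ih (Nat.le_of_succ_le hk1)
      obtain ⟨y', hy'D, hy'h, hy'c⟩ := step (η₀ * R ^ k) (η₀ * R ^ (k+1))
        (by positivity) (by positivity)
        (le_trans (hηk (k+1) hk1) (by linarith)) (hstepcond k) y hyΩ hyh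
      refine ⟨y', hΩmem y' hy'D (by have := hηk (k+1) hk1; clear_value η₀ R M h; linarith), hy'h, ?_⟩
      have : ((k:ℝ) + 1) * (ε/2) = k * (ε/2) + ε/2 := by ring
      push_cast
      rw [this]
      linarith
  obtain ⟨y, hyΩ, _, hyc⟩ := hind N le_rfl
  have h1 := abs_le.1 (hcoord y hyΩ)
  have h2 := abs_le.1 (hcoord x₀ hx₀Ω)
  linarith

/-- **Uniqueness for the DPP.** If `u` and `v` are bounded Borel functions on `Ω_ε` both
satisfying the DPP at every point of `Ω` and `u = v` on `Γ_ε`, then `u = v` on all of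
`Ω_ε = Ω ∪ Γ_ε`. -/
theorem dpp_uniqueness (n : ℕ) (hn : 2 ≤ n) (p : ℝ) (hp : 2 < p)
    (Ω : Set (EuclideanSpace ℝ (Fin n)))
    (hΩopen : IsOpen Ω) (hΩconn : IsConnected Ω) (hΩbdd : Bornology.IsBounded Ω)
    (ε : ℝ) (hε : ε ∈ Set.Ioo (0 : ℝ) 1)
    (u v : EuclideanSpace ℝ (Fin n) → ℝ)
    (humeas : Measurable u) (hvmeas : Measurable v)
    (hubdd : ∃ M, ∀ x ∈ Ω ∪ {x | x ∉ Ω ∧ Metric.infDist x (frontier Ω) ≤ ε}, |u x| ≤ M)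
    (hvbdd : ∃ M, ∀ x ∈ Ω ∪ {x | x ∉ Ω ∧ Metric.infDist x (frontier Ω) ≤ ε}, |v x| ≤ M)
    (hudpp : ∀ x ∈ Ω, u x =
        ((p - 2) / (n + p)) / (2 * ε) *
            (∫ t in (0 : ℝ)..ε, (sSup (u '' Metric.ball x t) + sInf (u '' Metric.ball x t)))
          + ((n + 2) / (n + p)) * ⨍ z in Metric.ball x ε, u z)
    (hvdpp : ∀ x ∈ Ω, v x =
        ((p - 2) / (n + p)) / (2 * ε) *
            (∫ t in (0 : ℝ)..ε, (sSup (v '' Metric.ball x t) + sInf (v '' Metric.ball x t)))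
          + ((n + 2) / (n + p)) * ⨍ z in Metric.ball x ε, v z)
    (hbdry : ∀ x ∈ {x | x ∉ Ω ∧ Metric.infDist x (frontier Ω) ≤ ε}, u x = v x) :
    ∀ x ∈ Ω ∪ {x | x ∉ Ω ∧ Metric.infDist x (frontier Ω) ≤ ε}, u x = v x := by
  have h1 := dpp_le n hn p hp Ω hΩopen hΩconn.nonempty hΩbdd ε hε u v humeas hvmeas
    hubdd hvbdd hudpp hvdpp hbdry
  have h2 := dpp_le n hn p hp Ω hΩopen hΩconn.nonempty hΩbdd ε hε v u hvmeas humeas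
    hvbdd hubdd hvdpp hudpp (fun x hx => (hbdry x hx).symm)
  exact fun x hx => le_antisymm (h1 x hx) (h2 x hx)
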